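/- Assume that for all real y ≥ 4 there is a prime in the interval [y, y + (22/25)√y·log y]. Let α > 2 and let x ≥ 1 be real satisfying x^(α/2−1) ≥ (22/25)·log x. Then the interval [x^α, (x+1)^α − 1) contains a prime. -/
import Mathlib

set_option maxHeartbeats 1000000 in
theorem stmt_11
    (hRH : ∀ y : ℝ, 4 ≤ y → ∃ p : ℕ, p.Prime ∧ y ≤ (p : ℝ) ∧
      (p : ℝ) ≤ y + 22 / 25 * Real.sqrt y * Real.log y)
    (α x : ℝ) (hα : 2 < α) (hx : 1 ≤ x)
    (hineq : (22 / 25 : ℝ) * Real.log x ≤ x ^ (α / 2 - 1)) :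
    ∃ p : ℕ, p.Prime ∧ x ^ α ≤ (p : ℝ) ∧ (p : ℝ) < (x + 1) ^ α - 1 := by
  have hx0 : (0:ℝ) < x := lt_of_lt_of_le one_pos hx
  have hα1 : (1:ℝ) ≤ α / 2 := by linarith
  -- key lower bound on (x+1)^α
  have hhalf : (x:ℝ) ^ (α/2) * (1 + α/2 * (1/x)) ≤ (x + 1) ^ (α/2) := by
    have hb : 1 + (α/2) * (1/x) ≤ (1 + 1/x) ^ (α/2) :=
      one_add_mul_self_le_rpow_one_add (by have := one_div_pos.mpr hx0; linarith) hα1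
    have hxx : (x + 1 : ℝ) = x * (1 + 1/x) := by field_simp
    rw [hxx, Real.mul_rpow hx0.le (by positivity)]
    exact mul_le_mul_of_nonneg_left hb (Real.rpow_nonneg hx0.le _)
  have hsq : ((x + 1) ^ (α/2) : ℝ) ^ 2 = (x + 1) ^ α := by
    rw [sq, ← Real.rpow_add (by linarith)]; ring_nf
  have hsqx : ((x:ℝ) ^ (α/2)) ^ 2 = x ^ α := by
    rw [sq, ← Real.rpow_add hx0]; ring_nf
  have hmain : x ^ α * (1 + α/2 * (1/x))^2 ≤ (x + 1) ^ α := by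
    rw [← hsq, ← hsqx, ← mul_pow]
    have h1 : 0 ≤ (x:ℝ) ^ (α/2) * (1 + α/2 * (1/x)) := by positivity
    exact pow_le_pow_left₀ h1 hhalf 2
  have hxα1 : x ^ (α - 1) = x ^ α / x := by
    rw [Real.rpow_sub hx0, Real.rpow_one]
  have hxα2 : x ^ (α - 2) = x ^ α / x ^ (2:ℕ) := by
    rw [Real.rpow_sub hx0]
    norm_num [Real.rpow_natCast]
  have hexp : x ^ α * (1 + α/2 * (1/x))^2
      = x ^ α + α * x ^ (α-1) + α^2/4 * x ^ (α-2) := by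
    rw [hxα1, hxα2]; field_simp; ring
  have hx2 : (1:ℝ) ≤ x ^ (α - 2) := Real.one_le_rpow hx (by linarith)
  have hgap : x ^ α + α * x ^ (α-1) + 1 < (x + 1) ^ α := by
    have h2 : (1:ℝ) < α^2/4 * x ^ (α-2) := by
      have : (1:ℝ) < α^2/4 := by nlinarith
      nlinarith
    nlinarith [hmain, hexp.symm.le]
  by_cases h4 : 4 ≤ x ^ α
  · obtain ⟨p, hp, hp1, hp2⟩ := hRH (x ^ α) h4
    refine ⟨p, hp, hp1, ?_⟩
    have hsqrt : Real.sqrt (x ^ α) = x ^ (α/2) := by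
      rw [Real.sqrt_eq_rpow, ← Real.rpow_mul hx0.le]; ring_nf
    have hlog : Real.log (x ^ α) = α * Real.log x := Real.log_rpow hx0 α
    have hb2 : 22 / 25 * Real.sqrt (x ^ α) * Real.log (x ^ α) ≤ α * x ^ (α-1) := by
      rw [hsqrt, hlog]
      have h5 : x ^ (α/2) * (22/25 * Real.log x) ≤ x ^ (α/2) * x ^ (α/2-1) :=
        mul_le_mul_of_nonneg_left hineq (Real.rpow_nonneg hx0.le _)
      have h6 : x ^ (α/2) * x ^ (α/2-1) = x ^ (α-1) := by
        rw [← Real.rpow_add hx0]; ring_nf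
      have hα0 : (0:ℝ) < α := by linarith
      calc 22 / 25 * x ^ (α/2) * (α * Real.log x)
          = α * (x ^ (α/2) * (22/25 * Real.log x)) := by ring
        _ ≤ α * (x ^ (α/2) * x ^ (α/2-1)) :=
            mul_le_mul_of_nonneg_left h5 hα0.le
        _ = α * x ^ (α-1) := by rw [h6]
    have : (p:ℝ) ≤ x ^ α + α * x ^ (α-1) := by linarith
    linarith
  · push_neg at h4
    by_cases h3 : x ^ α ≤ 3
    · refine ⟨3, Nat.prime_three, by exact_mod_cast h3, ?_⟩
      have h2x : (2:ℝ) ≤ x + 1 := by linarith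
      have : (4:ℝ) < (x+1) ^ α := by
        calc (4:ℝ) = (2:ℝ) ^ (2:ℝ) := by
              rw [show ((2:ℝ):ℝ) = ((2:ℕ):ℝ) by norm_num, Real.rpow_natCast]; norm_num
          _ < (2:ℝ) ^ α := Real.rpow_lt_rpow_left_iff (by norm_num) |>.mpr hα
          _ ≤ (x+1) ^ α := Real.rpow_le_rpow (by norm_num) h2x (by linarith)
      push_cast; linarith
    · push_neg at h3
      refine ⟨5, by norm_num, by push_cast; linarith, ?_⟩
      have hxlt2 : x < 2 := by
        by_contra hc
        push_neg at hc
        have : (4:ℝ) ≤ x ^ α := by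
          calc (4:ℝ) = (2:ℝ) ^ (2:ℝ) := by
                rw [show ((2:ℝ):ℝ) = ((2:ℕ):ℝ) by norm_num, Real.rpow_natCast]; norm_num
            _ ≤ (2:ℝ) ^ α := Real.rpow_le_rpow_left_iff (by norm_num) |>.mpr hα.le
            _ ≤ x ^ α := Real.rpow_le_rpow (by norm_num) hc (by linarith)
        linarith
      have hxx : (3/2 : ℝ) * x < x + 1 := by linarith
      have h32 : ((3/2:ℝ) * x) ^ α < (x+1) ^ α :=
        Real.rpow_lt_rpow (by positivity) hxx (by linarith)
      have hmul : ((3/2:ℝ) * x) ^ α = (3/2:ℝ) ^ α * x ^ α :=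
        Real.mul_rpow (by norm_num) hx0.le
      have h94 : (9/4:ℝ) ≤ (3/2:ℝ) ^ α := by
        calc (9/4:ℝ) = (3/2:ℝ) ^ (2:ℝ) := by
              rw [show (2:ℝ) = ((2:ℕ):ℝ) by norm_num, Real.rpow_natCast]; norm_num
          _ ≤ (3/2:ℝ) ^ α := Real.rpow_le_rpow_left_iff (by norm_num) |>.mpr hα.le
      have : (6:ℝ) < (x+1) ^ α := by
        have : (27/4:ℝ) ≤ (3/2:ℝ)^α * x^α := by nlinarith [Real.rpow_nonneg (show (0:ℝ) ≤ 3/2 by norm_num) α]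
        rw [hmul] at h32; linarith
      push_cast; linarith
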